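/- arXiv:1603.06123 — 4 statements merged into one kernel-verified Lean document; each statement's English description precedes it below -/
import Mathlib

section
/- Let S be a set of solutions with D, R : S → ℝ and budget B. Suppose s₁ is optimal for the Lagrangian cost with multiplier λ₁ ≥ 0 and R(s₁) ≤ B, and s₂ is optimal for the Lagrangian cost with multiplier λ₂ ≥ 0 and R(s₂) > B. If s° minimizes D over the feasible set {s ∈ S : R(s) ≤ B}, then D(s₂) ≤ D(s°) ≤ D(s₁), and hence |D(s₁) − D(s°)| ≤ |D(s₁) − D(s₂)|. -/
/-- Performance bound: the constrained optimum is sandwiched between two Lagrangian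
solutions with rates below and above the budget. -/
theorem stmt_1 {S : Type*} [Nonempty S] (D R : S → ℝ) (B lam₁ lam₂ : ℝ)
    (hlam₁ : 0 ≤ lam₁) (hlam₂ : 0 ≤ lam₂) (s₁ s₂ sCirc : S)
    (hopt₁ : ∀ s : S, D s₁ + lam₁ * R s₁ ≤ D s + lam₁ * R s)
    (hopt₂ : ∀ s : S, D s₂ + lam₂ * R s₂ ≤ D s + lam₂ * R s)
    (hR₁ : R s₁ ≤ B) (hR₂ : B < R s₂)
    (hfeas : R sCirc ≤ B)
    (hoptCirc : ∀ s : S, R s ≤ B → D sCirc ≤ D s) :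
    D s₂ ≤ D sCirc ∧ D sCirc ≤ D s₁ ∧ |D s₁ - D sCirc| ≤ |D s₁ - D s₂| := by
  have h1 : D sCirc ≤ D s₁ := hoptCirc s₁ hR₁
  have h2 := hopt₂ sCirc
  have h3 : D s₂ ≤ D sCirc := by nlinarith [mul_nonneg hlam₂ (sub_nonneg.2 (hfeas.trans hR₂.le))]
  refine ⟨h3, h1, ?_⟩
  rw [abs_of_nonneg (by linarith), abs_of_nonneg (by linarith)]
  linarith
end

section
/- Let S be a set with D, R : S → ℝ. Suppose s is Lagrangian-optimal for two distinct multipliers λ₁ < λ₂. Then for any λ strictly between λ₁ and λ₂, every Lagrangian-optimal solution t for λ satisfies D(t) + λ·R(t) = D(s) + λ·R(s) and R(t) = R(s), D(t) = D(s). (Multipliers strictly between two values sharing a common optimal solution produce only solutions with the same rate and distortion.) -/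
/-- Multipliers strictly between two values sharing a common optimal solution produce only
solutions with the same rate and distortion as that common solution. -/
theorem stmt_5 {S : Type*} [Nonempty S] (D R : S → ℝ) (lam₁ lam lam₂ : ℝ)
    (h₁ : lam₁ < lam) (h₂ : lam < lam₂) (s t : S)
    (hs₁ : ∀ u : S, D s + lam₁ * R s ≤ D u + lam₁ * R u)
    (hs₂ : ∀ u : S, D s + lam₂ * R s ≤ D u + lam₂ * R u)
    (ht : ∀ u : S, D t + lam * R t ≤ D u + lam * R u) :
    D t + lam * R t = D s + lam * R s ∧ R t = R s ∧ D t = D s := by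
  have a := hs₁ t
  have b := hs₂ t
  have c := ht s
  have hmain : D t + lam * R t = D s + lam * R s := by
    apply le_antisymm c
    nlinarith [mul_nonneg (le_of_lt (sub_pos.2 h₂)) (sub_nonneg.2 a),
      mul_nonneg (le_of_lt (sub_pos.2 h₁)) (sub_nonneg.2 b)]
  have hR : R t = R s := by
    apply le_antisymm
    · nlinarith
    · nlinarith
  rw [hR] at hmain
  exact ⟨by rw [hR]; linarith, hR, by linarith⟩
end

section
/- Let S be a finite set with D, R : S → ℝ, and λ ∈ ℝ. Suppose s* is the unique Lagrangian minimizer for λ. Define, over all t ∈ S with R(t) > R(s*), λ⁻ = max (D(s*) − D(t)) / (R(t) − R(s*)) (assuming such t exists). Then λ⁻ < λ, and at multiplier λ⁻, both s* and any maximizer t⁻ of the above ratio are simultaneously Lagrangian-optimal among the set {s*} ∪ {t : R(t) > R(s*)}. -/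
open scoped Classical

/-- Computing a smaller neighboring singular value: `lamMinus < lam`, and at `lamMinus`
both the previous unique minimizer and the ratio-maximizing larger-rate solution are
simultaneously optimal among the relevant set. -/
theorem stmt_12 {S : Type*} [Fintype S] (D R : S → ℝ) (lam : ℝ) (sStar : S)
    (hstrict : ∀ t : S, t ≠ sStar → D sStar + lam * R sStar < D t + lam * R t)
    (hT : (Finset.univ.filter (fun t : S => R sStar < R t)).Nonempty)
    (lamMinus : ℝ)
    (hlamMinus : lamMinus =
      (Finset.univ.filter (fun t : S => R sStar < R t)).sup' hT
        (fun t => (D sStar - D t) / (R t - R sStar)))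
    (tMinus : S) (htM : R sStar < R tMinus)
    (hattain : (D sStar - D tMinus) / (R tMinus - R sStar) = lamMinus) :
    lamMinus < lam ∧
    (∀ u : S, (u = sStar ∨ R sStar < R u) →
      D sStar + lamMinus * R sStar ≤ D u + lamMinus * R u ∧
      D tMinus + lamMinus * R tMinus ≤ D u + lamMinus * R u) := by
  -- For each t with R sStar < R t, the ratio is < lam
  have hratio : ∀ t : S, R sStar < R t → (D sStar - D t) / (R t - R sStar) < lam := by
    intro t ht
    have hne : t ≠ sStar := fun h => by simp [h] at ht
    have h := hstrict t hne
    rw [div_lt_iff₀ (by linarith)]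
    nlinarith
  -- lamMinus ≥ ratio for each t
  have hge : ∀ t : S, R sStar < R t →
      (D sStar - D t) / (R t - R sStar) ≤ lamMinus := by
    intro t ht
    rw [hlamMinus]
    exact Finset.le_sup' (fun t => (D sStar - D t) / (R t - R sStar)) (Finset.mem_filter.2 ⟨Finset.mem_univ t, ht⟩)
  have hlt : lamMinus < lam := by
    rw [hlamMinus]
    apply (Finset.sup'_lt_iff hT).2
    intro t ht
    exact hratio t (by simpa using ht)
  -- key: cost at sStar ≤ cost at u with larger rate, for lamMinus
  have hcost : ∀ u : S, R sStar < R u →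
      D sStar + lamMinus * R sStar ≤ D u + lamMinus * R u := by
    intro u hu
    have := hge u hu
    rw [div_le_iff₀ (by linarith)] at this
    nlinarith
  -- equality of costs at sStar and tMinus
  have heq : D tMinus + lamMinus * R tMinus = D sStar + lamMinus * R sStar := by
    have h : D sStar - D tMinus = lamMinus * (R tMinus - R sStar) := by
      have hne : R tMinus - R sStar ≠ 0 := by linarith
      have := (div_eq_iff hne).mp hattain
      linarith
    linarith
  refine ⟨hlt, fun u hu => ?_⟩
  rcases hu with rfl | hu
  · exact ⟨le_refl _, heq.le⟩
  · exact ⟨hcost u hu, heq.le.trans (hcost u hu)⟩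
end

section
/- Let S be a finite set with D, R : S → ℝ, λ ∈ ℝ, and suppose s* is the unique Lagrangian minimizer for λ. If T = {t ∈ S : R(t) > R(s*)} is nonempty and λ⁻ = max_{t∈T} (D(s*) − D(t))/(R(t) − R(s*)), then for every μ with λ⁻ < μ ≤ λ, s* remains the unique Lagrangian minimizer over S for multiplier μ. (No new optimal solution with larger rate emerges before the singular value λ⁻ is reached.) -/
open scoped Classical

/-- No new optimal solution emerges strictly between two neighboring singular values:
for `lamMinus < mu ≤ lam`, the unique minimizer for `lam` stays the unique minimizer. -/
theorem stmt_13 {S : Type*} [Fintype S] (D R : S → ℝ) (lam : ℝ) (sStar : S)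
    (hstrict : ∀ t : S, t ≠ sStar → D sStar + lam * R sStar < D t + lam * R t)
    (hsmall : ∀ t : S, t ≠ sStar → R t ≤ R sStar → D sStar < D t)
    (hT : (Finset.univ.filter (fun t : S => R sStar < R t)).Nonempty)
    (lamMinus : ℝ)
    (hlamMinus : lamMinus =
      (Finset.univ.filter (fun t : S => R sStar < R t)).sup' hT
        (fun t => (D sStar - D t) / (R t - R sStar)))
    (mu : ℝ) (hmu₁ : lamMinus < mu) (hmu₂ : mu ≤ lam) :
    ∀ t : S, t ≠ sStar → D sStar + mu * R sStar < D t + mu * R t := by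
  intro t ht
  by_cases hR : R sStar < R t
  · have hmem : t ∈ Finset.univ.filter (fun t : S => R sStar < R t) := by
      simp [hR]
    have hle : (D sStar - D t) / (R t - R sStar) ≤ lamMinus := by
      rw [hlamMinus]
      exact Finset.le_sup' (fun t => (D sStar - D t) / (R t - R sStar)) hmem
    have hpos : 0 < R t - R sStar := by linarith
    have : (D sStar - D t) / (R t - R sStar) < mu := lt_of_le_of_lt hle hmu₁
    have := (div_lt_iff₀ hpos).mp this
    nlinarith
  · push_neg at hR
    have h1 := hstrict t ht
    have h2 : R t - R sStar ≤ 0 := by linarith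
    nlinarith
end
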